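/- Let A = {L1, L2, L3}, B partitioned into B_1 = {R1, R2} and B_2 = {R3}, and weights w with w_{1,1} = w_{1,2} = 0.1 and w_{1,3} = 0.9. Among selections of exactly two elements of B for item L1, the weighted diversity contribution ∑_k (∑_{j∈B_k} w_{1,j} x_{1,j})^2 is minimized by choosing {R1, R2} (both in the same block), since (0.1+0.1)^2 = 0.04 < 0.1^2 + 0.9^2 = 0.82 and (0.1+0.1)^2 < 0.1^2 + 0.9^2; in particular the minimizer concentrates the assignment in a single block. -/

import Mathlib

theorem stmt18 (w : Fin 3 → ℝ) (hw : w = ![0.1, 0.1, 0.9])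
    (v : (Fin 3 → ℝ) → ℝ)
    (hv : v = fun x => (w 0 * x 0 + w 1 * x 1) ^ 2 + (w 2 * x 2) ^ 2) :
    ((0.1 + 0.1 : ℝ) ^ 2 < (0.1 : ℝ) ^ 2 + (0.9 : ℝ) ^ 2) ∧
    v ![1, 1, 0] < v ![1, 0, 1] ∧
    v ![1, 1, 0] < v ![0, 1, 1] ∧
    (∀ x : Fin 3 → ℝ, (∀ i, x i = 0 ∨ x i = 1) → (∑ i, x i = 2) →
      v ![1, 1, 0] ≤ v x) := by
  subst hw hv
  refine ⟨by norm_num, by norm_num [Matrix.cons_val_two], by norm_num [Matrix.cons_val_two], ?_⟩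
  intro x hx hsum
  rw [Fin.sum_univ_three] at hsum
  rcases hx 0 with h0 | h0 <;> rcases hx 1 with h1 | h1 <;> rcases hx 2 with h2 | h2 <;>
    simp [h0, h1, h2] at hsum ⊢ <;> norm_num
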